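/- Let k ≥ 3 and α_1 < … < α_k be positive reals. If αn + α/2 is an integer for some α = α_{j} and some n ∈ ℕ, then the Beatty sequences {⌊α_i n + α_i/2⌋}_{n=0}^∞, i = 1,…,k, do not partition ℕ, given that all α_i are rational with common numerator p (i.e., α_i = p/q_i in lowest-term lcm form). -/

import Mathlib

/-- Case 2 of the proof of the special case of Fraenkel's conjecture: if all
`α i = p / q i` (common numerator `p`) and some `α j * n + α j / 2` is an integer, then
the Beatty sequences `⌊α i * n + α i / 2⌋` do not partition ℕ. -/
theorem stmt_10 (k : ℕ) (hk : 3 ≤ k) (α : Fin k → ℝ) (hpos : ∀ i, 0 < α i)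
    (hmono : StrictMono α) (p : ℕ) (hp : 0 < p) (q : Fin k → ℕ) (hq : ∀ i, 0 < q i)
    (hα : ∀ i, α i = (p : ℝ) / (q i : ℝ))
    (hint : ∃ (j : Fin k) (n : ℕ) (z : ℤ), α j * n + α j / 2 = (z : ℝ)) :
    ¬ ∀ m : ℕ, ∃! pr : Fin k × ℕ, (m : ℤ) = ⌊α pr.1 * pr.2 + α pr.1 / 2⌋ := by
  intro H
  set T : Fin k → ℕ → ℕ := fun i N => ⌈(N : ℝ) / α i - 1/2⌉₊ with hT
  -- floor < N iff n < T i N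
  have hlt : ∀ (i : Fin k) (N n : ℕ), ⌊α i * n + α i / 2⌋ < (N : ℤ) ↔ n < T i N := by
    intro i N n
    rw [hT]
    simp only
    rw [Int.floor_lt, Nat.lt_ceil, lt_sub_iff_add_lt, lt_div_iff₀ (hpos i)]
    push_cast
    constructor <;> intro h <;> nlinarith [hpos i]
  have hfloor_eq : ∀ (i : Fin k) (n N : ℕ),
      ((N : ℤ) = ⌊α i * n + α i / 2⌋) ↔ (T i N ≤ n ∧ n < T i (N+1)) := by
    intro i n N
    have h1 := hlt i N n
    have h2 := hlt i (N+1) n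
    push_cast at h1 h2 ⊢
    omega
  have hmonoT : ∀ (i : Fin k) (N : ℕ), T i N ≤ T i (N+1) := by
    intro i N
    apply Nat.ceil_le_ceil
    have h := hpos i
    have h1 : (N : ℝ) ≤ ((N : ℕ) + 1 : ℕ) := by push_cast; linarith
    gcongr
  have hsum : ∀ N : ℕ, ∑ i, T i N = N := by
    intro N
    induction N with
    | zero =>
      have h0 : ∀ i : Fin k, T i 0 = 0 := by
        intro i
        rw [hT]; simp only
        rw [Nat.ceil_eq_zero]
        simp
      simp [h0]
    | succ N ih =>
      obtain ⟨⟨i₀, n₀⟩, hp0, hu⟩ := H N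
      have key : ∀ i, T i (N+1) = T i N + (if i = i₀ then 1 else 0) := by
        intro i
        by_cases hi : i = i₀
        · subst hi
          rw [if_pos rfl]
          have h1 := (hfloor_eq i n₀ N).mp hp0
          rcases lt_or_ge (T i N + 1) (T i (N+1)) with hc | hc
          · exfalso
            have e1 : ((i, T i N) : Fin k × ℕ) = (i, n₀) :=
              hu _ ((hfloor_eq i (T i N) N).mpr ⟨le_refl _, by omega⟩)
            have e2 : ((i, T i N + 1) : Fin k × ℕ) = (i, n₀) :=
              hu _ ((hfloor_eq i (T i N + 1) N).mpr ⟨by omega, by omega⟩)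
            simp only [Prod.mk.injEq] at e1 e2
            omega
          · omega
        · simp only [if_neg hi]
          rcases lt_or_ge (T i N) (T i (N+1)) with hc | hc
          · exfalso
            have e1 : ((i, T i N) : Fin k × ℕ) = (i₀, n₀) :=
              hu _ ((hfloor_eq i (T i N) N).mpr ⟨le_refl _, hc⟩)
            simp only [Prod.mk.injEq] at e1
            exact hi e1.1
          · have := hmonoT i N; omega
      calc ∑ i, T i (N+1) = ∑ i, (T i N + (if i = i₀ then 1 else 0)) :=
            Finset.sum_congr rfl (fun i _ => key i)
        _ = (∑ i, T i N) + ∑ i, (if i = i₀ then 1 else 0) := Finset.sum_add_distrib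
        _ = N + 1 := by rw [ih, Finset.sum_ite_eq' Finset.univ i₀ (fun _ => 1)]; simp
  -- integer version with q i / p
  have hp0R : (0:ℝ) < p := by exact_mod_cast hp
  have hdivr : ∀ (i : Fin k) (N : ℕ), (N : ℝ) / α i = (N : ℝ) * q i / p := by
    intro i N
    rw [hα i]
    have hq0 : (0:ℝ) < q i := by exact_mod_cast hq i
    field_simp
  have hsumZ : ∀ N : ℕ, ∑ i, ⌈(N : ℝ) * q i / p - 1/2⌉ = (N : ℤ) := by
    intro N
    have hcast : ∀ i : Fin k, ((T i N : ℤ)) = ⌈(N : ℝ) * q i / p - 1/2⌉ := by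
      intro i
      rw [hT]; simp only [← hdivr i N]
      rcases le_or_gt ((N : ℝ) / α i - 1/2) 0 with h | h
      · rw [Nat.ceil_eq_zero.mpr h]
        have hgt : (-1 : ℝ) < (N : ℝ) / α i - 1/2 := by
          have h2 : 0 ≤ (N : ℝ) / α i := div_nonneg (Nat.cast_nonneg N) (hpos i).le
          linarith
        rw [Int.ceil_eq_zero_iff.mpr ⟨hgt, h⟩]
        simp
      · exact Int.natCast_ceil_eq_ceil h.le
    calc ∑ i, ⌈(N : ℝ) * q i / p - 1/2⌉ = ∑ i, ((T i N : ℤ)) :=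
          Finset.sum_congr rfl (fun i _ => (hcast i).symm)
      _ = ((∑ i, T i N : ℕ) : ℤ) := by push_cast; ring
      _ = N := by rw [hsum N]
  -- sum of q i equals p
  have hsq : ∑ i, (q i : ℤ) = (p : ℤ) := by
    have h := hsumZ p
    have e : ∀ i : Fin k, ⌈(p : ℝ) * q i / p - 1/2⌉ = (q i : ℤ) := by
      intro i
      have harg : (p : ℝ) * q i / p - 1/2 = -(1/2) + ((q i : ℤ) : ℝ) := by
        push_cast; field_simp; ring
      rw [harg, Int.ceil_add_intCast]
      norm_num
    rw [Finset.sum_congr rfl (fun i _ => e i)] at h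
    exact h
  -- the bad integer point
  obtain ⟨j, n, z, hz⟩ := hint
  have hqjR : (0:ℝ) < q j := by exact_mod_cast hq j
  have hzR : (0:ℝ) < z := by
    rw [← hz]
    have := hpos j
    positivity
  have hkey : (p : ℤ) * (2*n+1) = 2 * q j * z := by
    have hr : (p:ℝ) * (2*n+1) = 2 * q j * z := by
      rw [hα j] at hz
      field_simp at hz
      refine mul_left_cancel₀ (ne_of_gt hqjR) ?_
      push_cast
      linear_combination (↑(q j) : ℝ) * hz
    exact_mod_cast hr
  have hpz : (0:ℤ) < (p:ℤ) := by exact_mod_cast hp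
  set N₀ : ℤ := z % p with hN₀
  have hN0eq : N₀ = z - (p:ℤ) * (z / p) := Int.emod_def z p
  have h0N : 0 ≤ N₀ := Int.emod_nonneg z (ne_of_gt hpz)
  have hNp : N₀ < p := Int.emod_lt_of_pos z hpz
  have hdvd : 2 * (q j : ℤ) * N₀ + p = 2 * p * ((n:ℤ) + 1 - q j * (z / p)) := by
    linear_combination 2 * (q j:ℤ) * hN0eq - hkey
  have hN0pos : 0 < N₀ := by
    rcases h0N.lt_or_eq with h | h
    · exact h
    · exfalso
      rw [← h] at hdvd
      have hw : (2*(p:ℤ)) ∣ (p:ℤ) := ⟨(n:ℤ) + 1 - q j * (z / p), by linarith [hdvd]⟩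
      have := Int.le_of_dvd hpz hw
      omega
  -- apply the sum identity at A = N₀ and B = p - N₀
  set A : ℕ := N₀.toNat with hA
  set B : ℕ := ((p:ℤ) - N₀).toNat with hB
  have hAZ : (A : ℤ) = N₀ := Int.toNat_of_nonneg h0N
  have hBZ : (B : ℤ) = (p:ℤ) - N₀ := Int.toNat_of_nonneg (by omega)
  have hAR : (A : ℝ) = ((N₀ : ℤ) : ℝ) := by exact_mod_cast congrArg (Int.cast : ℤ → ℝ) hAZ
  have hBR : (B : ℝ) = (p : ℝ) - ((N₀ : ℤ) : ℝ) := by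
    have := congrArg (Int.cast : ℤ → ℝ) hBZ
    push_cast at this
    exact this
  set y : Fin k → ℝ := fun i => ((N₀ : ℤ) : ℝ) * q i / p - 1/2 with hy
  have hsumA : ∑ i, ⌈y i⌉ = N₀ := by
    have h := hsumZ A
    rw [hAZ] at h
    rw [← h]
    exact Finset.sum_congr rfl (fun i _ => by rw [hy]; simp only [hAR])
  have hsumB : ∑ i, ((q i : ℤ) - ⌊y i⌋ - 1) = (p:ℤ) - N₀ := by
    have h := hsumZ B
    rw [hBZ] at h
    rw [← h]
    refine Finset.sum_congr rfl (fun i _ => ?_)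
    have harg : (B : ℝ) * q i / p - 1/2 = -(y i + 1) + ((q i : ℤ) : ℝ) := by
      rw [hy, hBR]
      push_cast
      field_simp
      ring
    rw [harg, Int.ceil_add_intCast, Int.ceil_neg, Int.floor_add_one]
    ring
  have hsumfloor : ∑ i, (⌊y i⌋ + 1) = N₀ := by
    have h1 : ∑ i, ((q i : ℤ) - ⌊y i⌋ - 1) = (∑ i, (q i : ℤ)) - ∑ i, (⌊y i⌋ + 1) := by
      rw [← Finset.sum_sub_distrib]
      exact Finset.sum_congr rfl (fun i _ => by ring)
    rw [h1, hsq] at hsumB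
    omega
  -- y j is an integer
  have hyj : y j = (((n:ℤ) + 1 - q j * (z / p) - 1 : ℤ) : ℝ) := by
    rw [hy]
    have hd : ((2 * (q j : ℤ) * N₀ + p : ℤ) : ℝ) = ((2 * p * ((n:ℤ) + 1 - q j * (z / p)) : ℤ) : ℝ) := by
      exact_mod_cast congrArg (Int.cast : ℤ → ℝ) hdvd
    push_cast at hd ⊢
    field_simp
    linarith
  have hceilj : ⌈y j⌉ < ⌊y j⌋ + 1 := by
    rw [hyj, Int.ceil_intCast, Int.floor_intCast]
    omega
  have hlast : (N₀ : ℤ) < N₀ := by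
    calc (N₀ : ℤ) = ∑ i, ⌈y i⌉ := hsumA.symm
      _ < ∑ i, (⌊y i⌋ + 1) := by
          refine Finset.sum_lt_sum (fun i _ => Int.ceil_le_floor_add_one (y i)) ⟨j, Finset.mem_univ j, hceilj⟩
      _ = N₀ := hsumfloor
  exact absurd hlast (lt_irrefl _)
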